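/- Let D be the complete bipartite digraph with vertex classes A and B, each of size m; that is, for every a ∈ A and b ∈ B both the edge from a to b and the edge from b to a are present, and there are no edges within A or within B. If D contains a subdivision of the complete digraph of order ℓ, then ⌈ℓ/2⌉·(⌈ℓ/2⌉ − 1) ≤ m. In particular, D has minimum outdegree m but contains no subdivision of the complete digraph of order greater than 2√m + 2. -/

import Mathlib

open scoped Classical

/-- `p` is the list of internal vertices of a directed path from `x` to `y` in the
digraph with adjacency relation `A`: the full vertex sequence `x :: p ++ [y]` is a
chain of directed edges and has no repeated vertices. -/
def IsDipath {V : Type*} (A : V → V → Prop) (x y : V) (p : List V) : Prop :=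
  List.Chain' A (x :: p ++ [y]) ∧ (x :: p ++ [y]).Nodup

/-- The outdegree of a vertex `v` in the digraph with adjacency relation `A`. -/
noncomputable def outDeg {V : Type*} [Fintype V] (A : V → V → Prop) (v : V) : ℕ :=
  (Finset.univ.filter fun w => A v w).card

/-- The digraph with adjacency relation `A` contains a subdivision of the complete
digraph of order `ℓ`: there are `ℓ` distinct branch vertices `b i`, and for every
ordered pair of distinct indices `i, j` a directed path from `b i` to `b j` whose
internal vertices avoid all branch vertices, these paths being pairwise internally
disjoint. -/
def ContainsCompleteSubdivision {V : Type*} (A : V → V → Prop) (ℓ : ℕ) : Prop :=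
  ∃ (b : Fin ℓ → V) (P : Fin ℓ → Fin ℓ → List V),
    Function.Injective b ∧
    (∀ i j : Fin ℓ, i ≠ j → IsDipath A (b i) (b j) (P i j)) ∧
    (∀ i j : Fin ℓ, i ≠ j → ∀ k : Fin ℓ, b k ∉ P i j) ∧
    (∀ i j i' j' : Fin ℓ, i ≠ j → i' ≠ j' → (i, j) ≠ (i', j') →
      ∀ v ∈ P i j, v ∉ P i' j')

/-- The complete bipartite digraph with vertex classes `A = Fin m ⊕ {left}` and
`B = Fin m ⊕ {right}`: all edges in both directions between the two classes, and no
edges inside a class. -/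
def completeBipartiteDigraph (m : ℕ) : (Fin m ⊕ Fin m) → (Fin m ⊕ Fin m) → Prop :=
  fun u v => u.isLeft ≠ v.isLeft


lemma card_side (m : ℕ) (c : Bool) :
    (Finset.univ.filter fun v : Fin m ⊕ Fin m => v.isLeft = c).card = m := by
  cases c
  · have h : (Finset.univ.filter fun v : Fin m ⊕ Fin m => v.isLeft = false)
        = Finset.univ.map ⟨Sum.inr, Sum.inr_injective⟩ := by
      ext v; cases v <;> simp
    rw [h, Finset.card_map, Finset.card_univ, Fintype.card_fin]
  · have h : (Finset.univ.filter fun v : Fin m ⊕ Fin m => v.isLeft = true)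
        = Finset.univ.map ⟨Sum.inl, Sum.inl_injective⟩ := by
      ext v; cases v <;> simp
    rw [h, Finset.card_map, Finset.card_univ, Fintype.card_fin]

lemma main_ineq (m ℓ : ℕ)
    (h : ContainsCompleteSubdivision (completeBipartiteDigraph m) ℓ) :
    ⌈(ℓ : ℝ) / 2⌉₊ * (⌈(ℓ : ℝ) / 2⌉₊ - 1) ≤ m := by
  obtain ⟨b, P, hinj, hpath, hbr, hdisj⟩ := h
  -- pigeonhole: one side contains at least ℓ/2 branch vertices
  obtain ⟨c, hc⟩ : ∃ c : Bool,
      ℓ ≤ 2 * (Finset.univ.filter fun i : Fin ℓ => (b i).isLeft = c).card := by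
    by_contra hcon
    push_neg at hcon
    have h1 := hcon true
    have h2 := hcon false
    have key := Finset.card_filter_add_card_filter_not
      (s := (Finset.univ : Finset (Fin ℓ))) (p := fun i => (b i).isLeft = true)
    simp only [Bool.not_eq_true, Finset.card_univ, Fintype.card_fin] at key
    omega
  set S := Finset.univ.filter fun i : Fin ℓ => (b i).isLeft = c with hS
  set k := S.card with hk
  have hceil : ⌈(ℓ : ℝ) / 2⌉₊ ≤ k := by
    apply Nat.ceil_le.mpr
    rw [div_le_iff₀ (by norm_num : (0:ℝ) < 2)]
    exact_mod_cast (by omega : ℓ ≤ k * 2)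
  -- every path between same-side branch vertices starts with a vertex on the other side
  have key : ∀ i j : Fin ℓ, i ≠ j → (b i).isLeft = c → (b j).isLeft = c →
      ∃ v rest, P i j = v :: rest ∧ v.isLeft = !c := by
    intro i j hij hi hj
    have hp := (hpath i j hij).1
    cases hPij : P i j with
    | nil =>
      rw [hPij] at hp
      have hadj : completeBipartiteDigraph m (b i) (b j) := by
        exact (List.isChain_cons_cons.mp hp).1
      exact absurd (hi.trans hj.symm) hadj
    | cons v rest =>
      refine ⟨v, rest, rfl, ?_⟩
      rw [hPij] at hp
      have hadj : completeBipartiteDigraph m (b i) v :=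
        (List.isChain_cons_cons.mp hp).1
      have hne : (b i).isLeft ≠ v.isLeft := hadj
      rw [hi] at hne
      cases hv : v.isLeft <;> cases c <;> simp_all
  -- injection from ordered pairs of same-side branch vertices into the other side
  have hcard : S.offDiag.card ≤ m := by
    have hmem : ∀ p ∈ S.offDiag, p.1 ∈ S ∧ p.2 ∈ S ∧ p.1 ≠ p.2 := by
      intro p hp
      exact Finset.mem_offDiag.mp hp
    have hmain := Finset.card_le_card_of_injOn
      (f := fun p : Fin ℓ × Fin ℓ => (P p.1 p.2).head?)
      (s := S.offDiag)
      (t := (Finset.univ.filter fun v : Fin m ⊕ Fin m => v.isLeft = !c).image some)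
      (by
        intro p hp
        obtain ⟨h1, h2, h3⟩ := hmem p hp
        rw [hS, Finset.mem_filter] at h1 h2
        obtain ⟨v, rest, heq, hv⟩ := key p.1 p.2 h3 h1.2 h2.2
        show (P p.1 p.2).head? ∈ _
        rw [heq]
        exact Finset.mem_image.mpr ⟨v, Finset.mem_filter.mpr ⟨Finset.mem_univ _, hv⟩, rfl⟩)
      (by
        intro p hp q hq hfeq
        obtain ⟨h1, h2, h3⟩ := hmem p hp
        obtain ⟨h1', h2', h3'⟩ := hmem q hq
        rw [hS, Finset.mem_filter] at h1 h2 h1' h2'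
        obtain ⟨v, rest, heq, hv⟩ := key p.1 p.2 h3 h1.2 h2.2
        obtain ⟨w, rest', heq', hw⟩ := key q.1 q.2 h3' h1'.2 h2'.2
        simp only [heq, heq', List.head?_cons, Option.some.injEq] at hfeq
        by_contra hpq
        have hpairs : (p.1, p.2) ≠ (q.1, q.2) := by simpa using hpq
        have hnot := hdisj p.1 p.2 q.1 q.2 h3 h3' hpairs v
          (by rw [heq]; exact List.mem_cons_self (a := v) (l := rest))
        rw [heq'] at hnot
        exact hnot (hfeq ▸ List.mem_cons_self (a := w) (l := rest')))
    rwa [Finset.card_image_of_injective _ (Option.some_injective _), card_side] at hmain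
  have hoff : S.offDiag.card = k * k - k := Finset.offDiag_card S
  have hstep : ⌈(ℓ : ℝ) / 2⌉₊ * (⌈(ℓ : ℝ) / 2⌉₊ - 1) ≤ k * (k - 1) :=
    Nat.mul_le_mul hceil (Nat.sub_le_sub_right hceil 1)
  have hkk : k * (k - 1) = k * k - k := by
    cases k with
    | zero => simp
    | succ n => simp [Nat.succ_sub_one, Nat.mul_succ]
  omega


/-- Let `D` be the complete bipartite digraph with two vertex classes of size `m`.
If `D` contains a subdivision of the complete digraph of order `ℓ`, then
`⌈ℓ/2⌉·(⌈ℓ/2⌉ - 1) ≤ m`. In particular, `D` has minimum outdegree `m` but contains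
no subdivision of the complete digraph of order greater than `2√m + 2`. -/
theorem complete_bipartite_digraph_subdivision (m : ℕ) :
    (∀ ℓ : ℕ, ContainsCompleteSubdivision (completeBipartiteDigraph m) ℓ →
      ⌈(ℓ : ℝ) / 2⌉₊ * (⌈(ℓ : ℝ) / 2⌉₊ - 1) ≤ m) ∧
    (∀ v : Fin m ⊕ Fin m, outDeg (completeBipartiteDigraph m) v = m) ∧
    (∀ ℓ : ℕ, 2 * Real.sqrt m + 2 < (ℓ : ℝ) →
      ¬ ContainsCompleteSubdivision (completeBipartiteDigraph m) ℓ) := by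
  constructor
  · exact fun ℓ h => main_ineq m ℓ h
  constructor
  · intro v
    unfold outDeg
    have h : (Finset.univ.filter fun w : Fin m ⊕ Fin m => completeBipartiteDigraph m v w)
        = Finset.univ.filter fun w : Fin m ⊕ Fin m => w.isLeft = !v.isLeft := by
      apply Finset.filter_congr
      intro w _
      cases v <;> cases w <;> simp [completeBipartiteDigraph]
    rw [h, card_side]
  · intro ℓ hℓ hsub
    have h1 := main_ineq m ℓ hsub
    set k := ⌈(ℓ : ℝ) / 2⌉₊ with hkdef
    have hk : (ℓ : ℝ) / 2 ≤ k := Nat.le_ceil _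
    have hs0 : (0:ℝ) ≤ Real.sqrt m := Real.sqrt_nonneg _
    have hm : Real.sqrt m * Real.sqrt m = m := Real.mul_self_sqrt (Nat.cast_nonneg m)
    have hs : Real.sqrt m + 1 < (k : ℝ) := by linarith
    have hk1 : 1 ≤ k := by
      have h2 : (1:ℝ) < (k:ℝ) := by linarith
      exact_mod_cast h2.le
    have hcast : ((k * (k - 1) : ℕ) : ℝ) = (k:ℝ) * ((k:ℝ) - 1) := by
      push_cast [hk1]
      ring
    have hlt : (m:ℝ) < (k:ℝ) * ((k:ℝ) - 1) := by nlinarith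
    have hle : ((k * (k - 1) : ℕ) : ℝ) ≤ (m:ℝ) := by exact_mod_cast h1
    rw [hcast] at hle
    linarith
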